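/- Let r̄ ≤ 0 be uplink power exponents satisfying the ordering constraint α_kk^[π_k(l'')] + r̄_k^[π_k(l'')] ≥ α_kk^[π_k(l')] + r̄_k^[π_k(l')] for all l'' > l'. Define γ̄_k^[π_k(l_k)] := max{ 0, max_{l' < l_k} (α_kk^[π_k(l')] + r̄_k^[π_k(l')]), max_{(l_j,j): j≠k} (α_jk^[l_j] + r̄_j^[l_j]) }. Then for every cell k, every l_k, every m_k ≥ l_k, and every user (l_j,j) with j ≠ k: α_kk^[π_k(l_k)] + r̄_k^[π_k(l_k)] ≤ α_kk^[π_k(m_k)] + γ̄_j^[l_j] − α_kj^[π_k(m_k)]. -/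
import Mathlib


/-- The uplink (IMAC) effective interference level
`γ̄_k^{[π_k(l_k)]} = max{ 0, max_{l' < l_k} (α_{kk}^{[π_k(l')]} + r̄_k^{[π_k(l')]}),
max_{(l_j,j): j≠k} (α_{jk}^{[l_j]} + r̄_j^{[l_j]}) }`, maxima over empty sets being `-∞`.
Here `α k l i = α_{ki}^{[l]}` is the channel strength between UE-(l,k) and BS-i and
`rb j l` is the uplink power exponent of user `l` of cell `j`. -/
noncomputable def gamBar (K : ℕ) (L : Fin K → ℕ)
    (α : (k : Fin K) → Fin (L k) → Fin K → ℝ)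
    (rb : (k : Fin K) → Fin (L k) → ℝ)
    (π : (k : Fin K) → Equiv.Perm (Fin (L k)))
    (k : Fin K) (lk : Fin (L k)) : ℝ :=
  max
    ((Finset.Iio lk).fold max 0 (fun l' => α k (π k l') k + rb k (π k l')))
    ((Finset.univ.filter (fun p : (j : Fin K) × Fin (L j) => p.1 ≠ k)).fold max 0
      (fun p => α p.1 p.2 k + rb p.1 p.2))

/-- chain of inequalities (127)–(129) in the second part of the duality
Lemma 1: under the ordering constraint on received uplink powers, for every `m_k ≥ l_k`
and every user `(l_j, j)` (at position `lj'`) of another cell `j ≠ k`,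
`α_{kk}^{[π_k(l_k)]} + r̄_k^{[π_k(l_k)]} ≤ α_{kk}^{[π_k(m_k)]} + γ̄_j^{[l_j]} − α_{kj}^{[π_k(m_k)]}`. -/
theorem stmt8 (K : ℕ) (L : Fin K → ℕ)
    (α : (k : Fin K) → Fin (L k) → Fin K → ℝ)
    (rb : (k : Fin K) → Fin (L k) → ℝ)
    (π : (k : Fin K) → Equiv.Perm (Fin (L k)))
    (hα : ∀ k l i, 0 ≤ α k l i)
    (hrb : ∀ k l, rb k l ≤ 0)
    (horder : ∀ k : Fin K, ∀ l' l'' : Fin (L k), l' < l'' →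
      α k (π k l') k + rb k (π k l') ≤ α k (π k l'') k + rb k (π k l'')) :
    ∀ k : Fin K, ∀ lk mk : Fin (L k), lk ≤ mk → ∀ j : Fin K, j ≠ k → ∀ lj' : Fin (L j),
      α k (π k lk) k + rb k (π k lk) ≤
        α k (π k mk) k + gamBar K L α rb π j lj' - α k (π k mk) j := by
  intro k lk mk hlm j hjk lj'
  have h1 : α k (π k mk) j + rb k (π k mk) ≤ gamBar K L α rb π j lj' := by
    refine le_max_of_le_right ?_
    rw [Finset.le_fold_max]
    right
    exact ⟨⟨k, π k mk⟩, by simp [hjk.symm], le_rfl⟩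
  have h2 : α k (π k lk) k + rb k (π k lk) ≤ α k (π k mk) k + rb k (π k mk) := by
    rcases lt_or_eq_of_le hlm with h | h
    · exact horder k lk mk h
    · rw [h]
  linarith
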